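/- Let k ≥ 1, let γ_1 < γ_2 < … < γ_{k+1} be real labels, and let ρ : ℝ → ℝ. For every index 1 ≤ i ≤ k and every v ∈ ℝ^k, the convex conjugate of the lifted piece ρ_i satisfies ρ_i^*(v) = ⟨1_{i−1}, v⟩ − (γ_i/(γ_{i+1} − γ_i))·v_i + (ρ + δ_{[γ_i, γ_{i+1}]})^*( v_i/(γ_{i+1} − γ_i) ), where (ρ + δ_{[γ_i,γ_{i+1}]})^* is the convex conjugate of the scalar function that equals ρ on [γ_i, γ_{i+1}] and +∞ elsewhere. -/

import Mathlib

/-- Dot product (inner product) on ℝ^k. -/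
noncomputable def dotk {k : ℕ} (v u : Fin k → ℝ) : ℝ := ∑ j, v j * u j

/-- Convex conjugate of an extended-real-valued function on ℝ^k:
`f^*(v) = sup_u ⟨v,u⟩ - f(u)`. -/
noncomputable def conjV {k : ℕ} (f : (Fin k → ℝ) → EReal) (v : Fin k → ℝ) : EReal :=
  ⨆ u : Fin k → ℝ, (dotk v u : EReal) - f u

/-- The vector `1_i` : first `i` entries 1, remaining entries 0 (so `onevec k 0 = 0`). -/
noncomputable def onevec (k : ℕ) (i : ℕ) : Fin k → ℝ := fun j => if (j : ℕ) < i then 1 else 0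

/-- `1_i^α` (with 0-based interval index `i`): first `i` entries 1, entry `i` equals `α`,
remaining entries 0.  This is `α • 1_{i+1} + (1-α) • 1_i` in the 0-based numbering of `onevec`. -/
noncomputable def liftvec {k : ℕ} (i : Fin k) (α : ℝ) : Fin k → ℝ :=
  fun j => if (j : ℕ) < (i : ℕ) then 1 else if j = i then α else 0

/-- `γ_i^α = γ_i + α (γ_{i+1} - γ_i)`, with 0-based interval index `i`. -/
noncomputable def gammaAff {k : ℕ} (γ : Fin (k+1) → ℝ) (i : Fin k) (α : ℝ) : ℝ :=
  γ i.castSucc + α * (γ i.succ - γ i.castSucc)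

/-- The lifted piece `ρ_i` : equals `ρ(γ_i^α)` if `u = 1_i^α` for some `α ∈ [0,1]`,
and `+∞` otherwise (the set below is a singleton or empty, and `sInf ∅ = ⊤` in `EReal`). -/
noncomputable def rhoPiece {k : ℕ} (γ : Fin (k+1) → ℝ) (ρ : ℝ → ℝ) (i : Fin k)
    (u : Fin k → ℝ) : EReal :=
  sInf {c : EReal | ∃ α ∈ Set.Icc (0:ℝ) 1, u = liftvec i α ∧ c = (ρ (gammaAff γ i α) : EReal)}

/-- Scalar convex conjugate: `f^*(v) = sup_u (v·u - f(u))`. -/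
noncomputable def conj1 (f : ℝ → EReal) (v : ℝ) : EReal :=
  ⨆ u : ℝ, ((v * u : ℝ) : EReal) - f u

/-- `ρ + δ_{[a,b]}` : equals `ρ` on `[a,b]` and `+∞` elsewhere. -/
noncomputable def rhoRestr (ρ : ℝ → ℝ) (a b : ℝ) : ℝ → EReal :=
  fun t => if t ∈ Set.Icc a b then (ρ t : EReal) else ⊤



lemma liftvec_inj {k : ℕ} (i : Fin k) {α β : ℝ} (h : liftvec i α = liftvec i β) : α = β := by
  have := congrFun h i
  simpa [liftvec] using this

lemma rhoPiece_liftvec_mem {k : ℕ} (γ : Fin (k+1) → ℝ) (ρ : ℝ → ℝ) (i : Fin k)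
    {α : ℝ} (hα : α ∈ Set.Icc (0:ℝ) 1) :
    rhoPiece γ ρ i (liftvec i α) = (ρ (gammaAff γ i α) : EReal) := by
  unfold rhoPiece
  have : {c : EReal | ∃ β ∈ Set.Icc (0:ℝ) 1, liftvec i α = liftvec i β ∧
      c = (ρ (gammaAff γ i β) : EReal)} = {(ρ (gammaAff γ i α) : EReal)} := by
    ext c
    constructor
    · rintro ⟨β, hβ, heq, rfl⟩
      have : β = α := (liftvec_inj i heq).symm
      simp [this]
    · rintro rfl
      exact ⟨α, hα, rfl, rfl⟩
  rw [this, sInf_singleton]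

lemma rhoPiece_liftvec_not_mem {k : ℕ} (γ : Fin (k+1) → ℝ) (ρ : ℝ → ℝ) (i : Fin k)
    {α : ℝ} (hα : α ∉ Set.Icc (0:ℝ) 1) :
    rhoPiece γ ρ i (liftvec i α) = ⊤ := by
  unfold rhoPiece
  have : {c : EReal | ∃ β ∈ Set.Icc (0:ℝ) 1, liftvec i α = liftvec i β ∧
      c = (ρ (gammaAff γ i β) : EReal)} = ∅ := by
    ext c
    simp only [Set.mem_setOf_eq, Set.mem_empty_iff_false, iff_false]
    rintro ⟨β, hβ, heq, rfl⟩
    exact hα ((liftvec_inj i heq) ▸ hβ)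
  rw [this, sInf_empty]

lemma rhoPiece_not_lift {k : ℕ} (γ : Fin (k+1) → ℝ) (ρ : ℝ → ℝ) (i : Fin k)
    {u : Fin k → ℝ} (hu : ∀ α : ℝ, u ≠ liftvec i α) :
    rhoPiece γ ρ i u = ⊤ := by
  unfold rhoPiece
  have : {c : EReal | ∃ β ∈ Set.Icc (0:ℝ) 1, u = liftvec i β ∧
      c = (ρ (gammaAff γ i β) : EReal)} = ∅ := by
    ext c
    simp only [Set.mem_setOf_eq, Set.mem_empty_iff_false, iff_false]
    rintro ⟨β, hβ, heq, rfl⟩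
    exact hu β heq
  rw [this, sInf_empty]

lemma dotk_liftvec {k : ℕ} (v : Fin k → ℝ) (i : Fin k) (α : ℝ) :
    dotk v (liftvec i α) = dotk (onevec k (i : ℕ)) v + α * v i := by
  unfold dotk onevec liftvec
  have h1 : ∀ j : Fin k, v j * (if (j:ℕ) < (i:ℕ) then (1:ℝ) else if j = i then α else 0)
      = (if (j:ℕ) < (i:ℕ) then (1:ℝ) else 0) * v j + (if j = i then α * v j else 0) := by
    intro j
    by_cases h : (j:ℕ) < (i:ℕ)
    · have : j ≠ i := by intro hji; subst hji; exact lt_irrefl _ h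
      simp [h, this]
    · by_cases h2 : j = i <;> simp [h, h2] <;> try ring
  rw [Finset.sum_congr rfl (fun j _ => h1 j), Finset.sum_add_distrib]
  congr 1
  simp

lemma ereal_coe_add_sub (c y : ℝ) (X : EReal) :
    ((c + y : ℝ) : EReal) - X = (c : EReal) + ((y : ℝ) - X) := by
  induction X using EReal.rec with
  | bot => rw [EReal.coe_sub_bot, EReal.coe_sub_bot, EReal.add_top_of_ne_bot (EReal.coe_ne_bot c)]
  | coe x =>
    rw [← EReal.coe_sub, ← EReal.coe_sub, ← EReal.coe_add]
    norm_cast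
    ring
  | top => rw [EReal.sub_top, EReal.sub_top, EReal.add_bot]

lemma ereal_add_iSup {ι : Sort*} [Nonempty ι] (c : ℝ) (f : ι → EReal) :
    (c : EReal) + ⨆ t, f t = ⨆ t, ((c : EReal) + f t) := by
  apply le_antisymm
  · have h : (⨆ t, f t) ≤ ((-c : ℝ) : EReal) + ⨆ t, ((c : EReal) + f t) := by
      apply iSup_le
      intro t
      have : f t = ((-c : ℝ) : EReal) + ((c : EReal) + f t) := by
        rw [← add_assoc, ← EReal.coe_add]
        norm_num
      rw [this]
      exact add_le_add (le_refl _) (le_iSup (fun t => (c : EReal) + f t) t)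
    calc (c : EReal) + ⨆ t, f t ≤ (c : EReal) + (((-c : ℝ) : EReal) + ⨆ t, ((c : EReal) + f t)) :=
          add_le_add (le_refl _) h
      _ = ⨆ t, ((c : EReal) + f t) := by
          rw [← add_assoc, ← EReal.coe_add]; norm_num
  · exact iSup_le fun t => add_le_add (le_refl _) (le_iSup f t)


/-- Proposition 1, conjugate formula. For labels `γ_1 < … < γ_{k+1}`,
`ρ : ℝ → ℝ`, every interval index `i` and every `v ∈ ℝ^k`:
`ρ_i^*(v) = ⟨1_{i-1}, v⟩ - (γ_i/(γ_{i+1}-γ_i))·v_i + (ρ + δ_{[γ_i,γ_{i+1}]})^*(v_i/(γ_{i+1}-γ_i))`.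
(Here `i : Fin k` is the 0-based interval index, so the paper's `1_{i-1}` is `onevec k i`.) -/
theorem conj_rhoPiece_eq {k : ℕ} (hk : 1 ≤ k) (γ : Fin (k+1) → ℝ) (hγ : StrictMono γ)
    (ρ : ℝ → ℝ) (i : Fin k) (v : Fin k → ℝ) :
    conjV (rhoPiece γ ρ i) v
      = ((dotk (onevec k (i : ℕ)) v
            - (γ i.castSucc / (γ i.succ - γ i.castSucc)) * v i : ℝ) : EReal)
        + conj1 (rhoRestr ρ (γ i.castSucc) (γ i.succ)) (v i / (γ i.succ - γ i.castSucc)) := by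
  set a := γ i.castSucc with ha
  set b := γ i.succ with hb
  have hΔ : 0 < b - a := sub_pos.mpr (hγ Fin.castSucc_lt_succ)
  have hΔ' : b - a ≠ 0 := ne_of_gt hΔ
  set s := dotk (onevec k (i : ℕ)) v with hs
  set c : ℝ := s - a / (b - a) * v i with hc
  set w : ℝ := v i / (b - a) with hw
  -- key pointwise identity
  have key : ∀ α : ℝ,
      (dotk v (liftvec i α) : EReal) - rhoPiece γ ρ i (liftvec i α)
        = ((c + w * (a + α * (b - a)) : ℝ) : EReal) - rhoRestr ρ a b (a + α * (b - a)) := by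
    intro α
    have hdot : dotk v (liftvec i α) = c + w * (a + α * (b - a)) := by
      rw [dotk_liftvec, hc, hw, ← hs]
      field_simp
      ring
    by_cases hα : α ∈ Set.Icc (0:ℝ) 1
    · have hmem : a + α * (b - a) ∈ Set.Icc a b := by
        constructor
        · nlinarith [hα.1, hα.2]
        · nlinarith [hα.1, hα.2]
      rw [rhoPiece_liftvec_mem γ ρ i hα, rhoRestr, if_pos hmem, hdot]
      rfl
    · have hmem : a + α * (b - a) ∉ Set.Icc a b := by
        intro hin
        apply hα
        constructor
        · nlinarith [hin.1]
        · nlinarith [hin.2]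
      rw [rhoPiece_liftvec_not_mem γ ρ i hα, rhoRestr, if_neg hmem, EReal.sub_top, EReal.sub_top]
  have main : conjV (rhoPiece γ ρ i) v
      = ⨆ t : ℝ, ((c + w * t : ℝ) : EReal) - rhoRestr ρ a b t := by
    unfold conjV
    apply le_antisymm
    · apply iSup_le
      intro u
      by_cases hu : ∃ α : ℝ, u = liftvec i α
      · obtain ⟨α, rfl⟩ := hu
        rw [key α]
        exact le_iSup (fun t => ((c + w * t : ℝ) : EReal) - rhoRestr ρ a b t) (a + α * (b - a))
      · push_neg at hu
        rw [rhoPiece_not_lift γ ρ i hu, EReal.sub_top]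
        exact bot_le
    · apply iSup_le
      intro t
      have ht : a + ((t - a) / (b - a)) * (b - a) = t := by field_simp; ring
      have := key ((t - a) / (b - a))
      rw [ht] at this
      rw [← this]
      exact le_iSup (fun u => (dotk v u : EReal) - rhoPiece γ ρ i u) (liftvec i ((t - a) / (b - a)))
  rw [main]
  unfold conj1
  rw [ereal_add_iSup c (fun t => ((w * t : ℝ) : EReal) - rhoRestr ρ a b t)]
  apply iSup_congr
  intro t
  exact ereal_coe_add_sub c (w * t) (rhoRestr ρ a b t)
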